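/- Fix i ∈ {1,…,k} with t_i ≥ 2, d_{i−1} < d_i and c_i < c_{i+1} (with d_0 = 0, c_{k+1} = n+1), and write t = t_i, d = d_i, c = c_i. Let N = L ∖ {x_{d,c}}, a ladder with the same upper outside corners as L and lower outside corners (d_1,c_1),…,(d_{i−1},c_{i−1}),(d−1,c),(d,c+1),(d_{i+1},c_{i+1}),…,(d_k,c_k), and let τ = (t_1,…,t_{i−1},t_i,t_i,t_{i+1},…,t_k). Then I_t(L) = I_τ(N) + Q, where Q is the ideal of K[L] generated by the t×t minors of X with all entries in L_i that involve the entry x_{d,c}, i.e. minors with rows i_1 < … < i_{t−1} < d together with row d and columns c together with c < j_1 < … < j_{t−1} ≤ n, all of whose entries lie in L. -/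
import Mathlib


open MvPolynomial

/-- The data of a two-sided ladder inside an `m × n` matrix of indeterminates,
with upper outside corners `(b i, a i)` and lower outside corners `(d j, c j)`,
together with a vector `t` of minor sizes, subject to the standing assumptions. -/
structure LadderData where
  m : ℕ
  n : ℕ
  h : ℕ
  k : ℕ
  hpos : 0 < h
  kpos : 0 < k
  hmn : m ≤ n
  b : Fin h → ℕ
  a : Fin h → ℕ
  d : Fin k → ℕ
  c : Fin k → ℕ
  t : Fin k → ℕ
  b_mono : StrictMono b
  a_mono : StrictMono a
  b_first : b ⟨0, hpos⟩ = 1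
  b_le : ∀ i, b i ≤ m
  a_pos : ∀ i, 1 ≤ a i
  a_last : a ⟨h - 1, Nat.sub_lt hpos Nat.one_pos⟩ = n
  d_mono : Monotone d
  c_mono : Monotone c
  d_pos : ∀ j, 1 ≤ d j
  d_last : d ⟨k - 1, Nat.sub_lt kpos Nat.one_pos⟩ = m
  c_first : c ⟨0, kpos⟩ = 1
  c_le : ∀ j, c j ≤ n
  corners_distinct : ∀ j j' : Fin k, d j = d j' → c j = c j' → j = j'
  t_pos : ∀ j, 1 ≤ t j
  step_d : ∀ (j : ℕ) (hj : j + 1 < k),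
    d ⟨j, Nat.lt_of_succ_lt hj⟩ + t ⟨j + 1, hj⟩ < d ⟨j + 1, hj⟩ + t ⟨j, Nat.lt_of_succ_lt hj⟩
  step_c : ∀ (j : ℕ) (hj : j + 1 < k),
    c ⟨j, Nat.lt_of_succ_lt hj⟩ + t ⟨j, Nat.lt_of_succ_lt hj⟩ < c ⟨j + 1, hj⟩ + t ⟨j + 1, hj⟩

namespace LadderData

/-- The set of positions (row, column) of the indeterminates of the ladder `L`. -/
def L (D : LadderData) : Set (ℕ × ℕ) :=
  {p | ∃ (i : Fin D.h) (j : Fin D.k),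
    D.b i ≤ p.1 ∧ p.1 ≤ D.m ∧ 1 ≤ p.2 ∧ p.2 ≤ D.a i ∧
    1 ≤ p.1 ∧ p.1 ≤ D.d j ∧ D.c j ≤ p.2 ∧ p.2 ≤ D.n}

/-- The one-sided subladder `L_j` with lower outside corner `(d j, c j)`. -/
def Lj (D : LadderData) (j : Fin D.k) : Set (ℕ × ℕ) :=
  {p ∈ D.L | p.1 ≤ D.d j ∧ D.c j ≤ p.2}

end LadderData

/-- The ideal of `K[V]` (`V` a set of positions of indeterminates) generated by the
`s × s` minors of the generic matrix all of whose entries lie in `S`. -/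
noncomputable def minorsIdeal (K : Type*) [Field K] (V S : Set (ℕ × ℕ)) (s : ℕ) :
    Ideal (MvPolynomial ↥V K) :=
  Ideal.span {f | ∃ r cc : Fin s → ℕ, StrictMono r ∧ StrictMono cc ∧
    (∀ p q, (r p, cc q) ∈ S) ∧
    ∃ hmem : ∀ p q, ((r p, cc q) : ℕ × ℕ) ∈ V,
    f = (Matrix.of fun p q =>
      (MvPolynomial.X (⟨(r p, cc q), hmem p q⟩ : V) : MvPolynomial ↥V K)).det}

/-- The mixed ladder determinantal ideal `I_t(L) = I_{t_1}(L_1) + ⋯ + I_{t_k}(L_k) ⊆ K[L]`. -/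
noncomputable def LadderData.It (D : LadderData) (K : Type*) [Field K] :
    Ideal (MvPolynomial ↥D.L K) :=
  ⨆ j : Fin D.k, minorsIdeal K D.L (D.Lj j) (D.t j)

/-- Every entry of the ladder is involved in one of the minors generating `I_t(L)`. -/
def LadderData.Nondeg (D : LadderData) : Prop :=
  ∀ p ∈ D.L, ∃ (j : Fin D.k) (r cc : Fin (D.t j) → ℕ),
    StrictMono r ∧ StrictMono cc ∧ (∀ u v, (r u, cc v) ∈ D.Lj j) ∧ ∃ u v, (r u, cc v) = p

namespace LadderData

/-- `d_{i−1}`, with the convention `d_0 = 0` (the fixed paper index `i` corresponds to the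
0-based index `i0`). -/
def dPrev (D : LadderData) (i0 : Fin D.k) : ℕ :=
  if h : 0 < (i0 : ℕ) then D.d ⟨(i0 : ℕ) - 1, by have := i0.isLt; omega⟩ else 0

/-- `c_{i+1}`, with the convention `c_{k+1} = n + 1`. -/
def cNext (D : LadderData) (i0 : Fin D.k) : ℕ :=
  if h : (i0 : ℕ) + 1 < D.k then D.c ⟨(i0 : ℕ) + 1, h⟩ else D.n + 1

/-- The ladder `N = L ∖ {x_{d,c}}`. -/
def Nset (D : LadderData) (i0 : Fin D.k) : Set (ℕ × ℕ) :=
  D.L \ {(D.d i0, D.c i0)}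

/-- The rows of the lower outside corners
`(d_1,c_1),…,(d_{i−1},c_{i−1}),(d−1,c),(d,c+1),(d_{i+1},c_{i+1}),…,(d_k,c_k)` of `N`. -/
def dN (D : LadderData) (i0 : Fin D.k) (l : Fin (D.k + 1)) : ℕ :=
  if h1 : (l : ℕ) < (i0 : ℕ) then D.d ⟨(l : ℕ), by have := i0.isLt; omega⟩
  else if (l : ℕ) = (i0 : ℕ) then D.d i0 - 1
  else if (l : ℕ) = (i0 : ℕ) + 1 then D.d i0
  else D.d ⟨(l : ℕ) - 1, by have := l.isLt; have := D.kpos; omega⟩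

/-- The columns of the lower outside corners of `N`. -/
def cN (D : LadderData) (i0 : Fin D.k) (l : Fin (D.k + 1)) : ℕ :=
  if h1 : (l : ℕ) < (i0 : ℕ) then D.c ⟨(l : ℕ), by have := i0.isLt; omega⟩
  else if (l : ℕ) = (i0 : ℕ) then D.c i0
  else if (l : ℕ) = (i0 : ℕ) + 1 then D.c i0 + 1
  else D.c ⟨(l : ℕ) - 1, by have := l.isLt; have := D.kpos; omega⟩

/-- `τ = (t_1,…,t_{i−1},t_i,t_i,t_{i+1},…,t_k)`. -/
def tN (D : LadderData) (i0 : Fin D.k) (l : Fin (D.k + 1)) : ℕ :=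
  if h1 : (l : ℕ) ≤ (i0 : ℕ) then D.t ⟨(l : ℕ), by have := i0.isLt; omega⟩
  else D.t ⟨(l : ℕ) - 1, by have := l.isLt; have := D.kpos; omega⟩

/-- The mixed ladder determinantal ideal `I_τ(N)`, regarded as an ideal of `K[L]`. -/
noncomputable def IτN (D : LadderData) (i0 : Fin D.k) (K : Type*) [Field K] :
    Ideal (MvPolynomial ↥D.L K) :=
  ⨆ l : Fin (D.k + 1),
    minorsIdeal K D.L {p ∈ D.Nset i0 | p.1 ≤ D.dN i0 l ∧ D.cN i0 l ≤ p.2} (D.tN i0 l)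

end LadderData

open Classical in
/-- The minor of the generic matrix with rows `r` and columns `cc`, with the convention
that it equals `0` whenever it involves an entry outside of `V`. -/
noncomputable def minorOrZero (K : Type*) [Field K] (V : Set (ℕ × ℕ)) {s : ℕ}
    (r cc : Fin s → ℕ) : MvPolynomial ↥V K :=
  if h : ∀ p q, ((r p, cc q) : ℕ × ℕ) ∈ V then
    (Matrix.of fun p q => (MvPolynomial.X (⟨(r p, cc q), h p q⟩ : V) : MvPolynomial ↥V K)).det
  else 0


/-- The row indices `i_1 < … < i_s, d` (appending `d` at the end). -/
def snocRow {s : ℕ} (ri : Fin s → ℕ) (dv : ℕ) : Fin (s + 1) → ℕ := Fin.snoc ri dv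

/-- The column indices `c, j_1 < … < j_s` (prepending `c` at the front). -/
def consCol {s : ℕ} (cv : ℕ) (js : Fin s → ℕ) : Fin (s + 1) → ℕ := Fin.cons cv js

/-- The ideal `Q ⊆ K[L]` generated by the `t × t` minors of `X` with all entries in `L_i`
that involve the corner entry `x_{d,c}`: rows `i_1 < … < i_{t−1} < d` together with `d`,
columns `c` together with `c < j_1 < … < j_{t−1}`. -/
noncomputable def cornerMinorsIdeal (D : LadderData) (i0 : Fin D.k) (s : ℕ)
    (K : Type*) [Field K] : Ideal (MvPolynomial ↥D.L K) :=
  Ideal.span {f | ∃ ri js : Fin s → ℕ, StrictMono ri ∧ StrictMono js ∧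
    (∀ p, ri p < D.d i0) ∧ (∀ q, D.c i0 < js q) ∧
    (∀ p q : Fin (s + 1),
      (snocRow ri (D.d i0) p, consCol (D.c i0) js q) ∈ D.Lj i0) ∧
    ∃ hmem : ∀ p q : Fin (s + 1),
      ((snocRow ri (D.d i0) p, consCol (D.c i0) js q) : ℕ × ℕ) ∈ D.L,
    f = (Matrix.of fun p q : Fin (s + 1) =>
      (MvPolynomial.X (⟨(snocRow ri (D.d i0) p, consCol (D.c i0) js q),
        hmem p q⟩ : D.L) : MvPolynomial ↥D.L K)).det}


section Aux

variable {K : Type*} [Field K]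

lemma minorsIdeal_mono (V : Set (ℕ × ℕ)) {S S' : Set (ℕ × ℕ)} (h : S ⊆ S') (s : ℕ) :
    minorsIdeal K V S s ≤ minorsIdeal K V S' s := by
  apply Ideal.span_mono
  rintro f ⟨r, cc, hr, hcc, hS, hmem, rfl⟩
  exact ⟨r, cc, hr, hcc, fun p q => h (hS p q), hmem, rfl⟩

lemma strictMono_snoc {s : ℕ} {ri : Fin s → ℕ} {dv : ℕ} (h : StrictMono ri)
    (hd : ∀ p, ri p < dv) : StrictMono (Fin.snoc ri dv : Fin (s + 1) → ℕ) := by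
  intro p q hpq
  rcases Fin.eq_castSucc_or_eq_last q with ⟨q', rfl⟩ | rfl
  · rcases Fin.eq_castSucc_or_eq_last p with ⟨p', rfl⟩ | rfl
    · simpa using h (by exact_mod_cast hpq)
    · exact absurd hpq (not_lt.2 (Fin.le_last _))
  · rcases Fin.eq_castSucc_or_eq_last p with ⟨p', rfl⟩ | rfl
    · simpa using hd p'
    · exact absurd hpq (lt_irrefl _)

lemma strictMono_cons {s : ℕ} {js : Fin s → ℕ} {cv : ℕ} (h : StrictMono js)
    (hc : ∀ q, cv < js q) : StrictMono (Fin.cons cv js : Fin (s + 1) → ℕ) := by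
  intro p q hpq
  rcases Fin.eq_zero_or_eq_succ q with rfl | ⟨q', rfl⟩
  · exact absurd hpq (Fin.not_lt_zero p)
  · rcases Fin.eq_zero_or_eq_succ p with rfl | ⟨p', rfl⟩
    · simpa using hc q'
    · simpa using h (Fin.succ_lt_succ_iff.mp hpq)

end Aux

set_option maxRecDepth 8000 in
/-- **Lemma.** Fix `i` with `t_i ≥ 2`, `d_{i−1} < d_i`, `c_i < c_{i+1}` and write `t = t_i`,
`d = d_i`, `c = c_i`.  Then `I_t(L) = I_τ(N) + Q`, where `Q` is the ideal generated by the
`t × t` minors of `X` with all entries in `L_i` that involve the entry `x_{d,c}`. -/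
theorem It_eq_IτN_add_cornerMinors (K : Type*) [Field K]
    (D : LadderData) (hnd : D.Nondeg) (i0 : Fin D.k)
    (hd : D.dPrev i0 < D.d i0) (hc : D.c i0 < D.cNext i0)
    (s : ℕ) (hs1 : 1 ≤ s) (hs : s + 1 = D.t i0) :
    D.It K = D.IτN i0 K + cornerMinorsIdeal D i0 s K := by
  rw [Submodule.add_eq_sup]
  apply le_antisymm
  · -- `I_t(L) ≤ I_τ(N) ⊔ Q`
    apply iSup_le
    intro j
    rcases lt_trichotomy (j : ℕ) (i0 : ℕ) with hj | hj | hj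
    · -- case `j < i0` : use the component `l = j.castSucc` of `IτN`
      have hi0pos : 0 < (i0 : ℕ) := by omega
      have hdj : D.d j < D.d i0 := by
        have h1 : D.d j ≤ D.dPrev i0 := by
          rw [LadderData.dPrev, dif_pos hi0pos]
          exact D.d_mono (by rw [Fin.le_def]; simp; omega)
        omega
      refine le_trans ?_ le_sup_left
      have ht : D.tN i0 j.castSucc = D.t j := by
        simp only [LadderData.tN, Fin.coe_castSucc]
        rw [dif_pos (by omega)]
      have hdN : D.dN i0 j.castSucc = D.d j := by
        simp only [LadderData.dN, Fin.coe_castSucc]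
        rw [dif_pos (by omega)]
      have hcN : D.cN i0 j.castSucc = D.c j := by
        simp only [LadderData.cN, Fin.coe_castSucc]
        rw [dif_pos (by omega)]
      have hsub : D.Lj j ⊆ {p ∈ D.Nset i0 | p.1 ≤ D.dN i0 j.castSucc ∧ D.cN i0 j.castSucc ≤ p.2} := by
        rintro ⟨p1, p2⟩ ⟨hpL, hp1, hp2⟩
        refine ⟨⟨hpL, fun hEq => ?_⟩, by rw [hdN]; exact hp1, by rw [hcN]; exact hp2⟩
        have h1 : p1 = D.d i0 := congrArg Prod.fst hEq
        omega
      rw [← ht]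
      exact le_trans (minorsIdeal_mono D.L hsub _)
        (le_iSup (fun l => minorsIdeal K D.L
          {p ∈ D.Nset i0 | p.1 ≤ D.dN i0 l ∧ D.cN i0 l ≤ p.2} (D.tN i0 l)) j.castSucc)
    · -- case `j = i0`
      have hji : j = i0 := Fin.ext hj
      rw [hji]
      rw [← hs]
      refine Ideal.span_le.mpr ?_
      rintro f ⟨r, cc, hr, hcc, hS, hmemL, rfl⟩
      have hS' : ∀ p q, (r p, cc q) ∈ D.L ∧ r p ≤ D.d i0 ∧ D.c i0 ≤ cc q := fun p q => hS p q
      by_cases h1 : r (Fin.last s) = D.d i0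
      · by_cases h2 : cc 0 = D.c i0
        · -- the minor involves the corner entry: it is a generator of `Q`
          refine Ideal.mem_sup_right (Ideal.subset_span ?_)
          have hre : snocRow (r ∘ Fin.castSucc) (D.d i0) = r := by
            funext p
            rcases Fin.eq_castSucc_or_eq_last p with ⟨p', rfl⟩ | rfl
            · simp only [snocRow, Fin.snoc_castSucc, Function.comp_apply]
            · simp only [snocRow, Fin.snoc_last]
              exact h1.symm
          have hce : consCol (D.c i0) (cc ∘ Fin.succ) = cc := by
            funext q
            rcases Fin.eq_zero_or_eq_succ q with rfl | ⟨q', rfl⟩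
            · simp only [consCol, Fin.cons_zero]
              exact h2.symm
            · simp only [consCol, Fin.cons_succ, Function.comp_apply]
          refine ⟨r ∘ Fin.castSucc, cc ∘ Fin.succ,
            hr.comp Fin.strictMono_castSucc,
            hcc.comp Fin.strictMono_succ,
            fun p => h1 ▸ hr (Fin.castSucc_lt_last p),
            fun q => h2 ▸ hcc (Fin.succ_pos q), ?_⟩
          rw [hre, hce]
          exact ⟨hS, hmemL, rfl⟩
        · -- the minor misses column `c` : component `l = i0.succ`
          have hclt : ∀ q, D.c i0 < cc q := fun q =>
            lt_of_lt_of_le (lt_of_le_of_ne (hS' 0 0).2.2 (Ne.symm h2))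
              (hcc.monotone (Fin.zero_le q))
          refine Ideal.mem_sup_left ?_
          have ht : D.tN i0 i0.succ = s + 1 := by
            simp only [LadderData.tN, Fin.val_succ]
            rw [dif_neg (by omega)]
            exact hs.symm
          have hdN : D.dN i0 i0.succ = D.d i0 := by
            simp only [LadderData.dN, Fin.val_succ]
            rw [dif_neg (by omega), if_neg (by omega), if_pos trivial]
          have hcN : D.cN i0 i0.succ = D.c i0 + 1 := by
            simp only [LadderData.cN, Fin.val_succ]
            rw [dif_neg (by omega), if_neg (by omega), if_pos trivial]
          apply Submodule.mem_iSup_of_mem i0.succ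
          rw [ht]
          refine Ideal.subset_span ⟨r, cc, hr, hcc, fun p q => ?_, hmemL, rfl⟩
          refine ⟨⟨(hS' p q).1, fun hEq => ?_⟩, by rw [hdN]; exact (hS' p q).2.1,
            by rw [hcN]; have := hclt q; omega⟩
          have h3 : cc q = D.c i0 := congrArg Prod.snd hEq
          have := hclt q
          omega
      · -- the minor misses row `d` : component `l = i0.castSucc`
        have hrlt : ∀ p, r p < D.d i0 := fun p =>
          lt_of_le_of_lt (hr.monotone (Fin.le_last p))
            (lt_of_le_of_ne (hS' (Fin.last s) 0).2.1 h1)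
        refine Ideal.mem_sup_left ?_
        have ht : D.tN i0 i0.castSucc = s + 1 := by
          simp only [LadderData.tN, Fin.coe_castSucc]
          rw [dif_pos (le_refl _)]
          exact hs.symm
        have hdN : D.dN i0 i0.castSucc = D.d i0 - 1 := by
          simp only [LadderData.dN, Fin.coe_castSucc]
          rw [dif_neg (by omega), if_pos trivial]
        have hcN : D.cN i0 i0.castSucc = D.c i0 := by
          simp only [LadderData.cN, Fin.coe_castSucc]
          rw [dif_neg (by omega), if_pos trivial]
        apply Submodule.mem_iSup_of_mem i0.castSucc
        rw [ht]
        refine Ideal.subset_span ⟨r, cc, hr, hcc, fun p q => ?_, hmemL, rfl⟩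
        refine ⟨⟨(hS' p q).1, fun hEq => ?_⟩, by rw [hdN]; have := hrlt p; omega,
          by rw [hcN]; exact (hS' p q).2.2⟩
        have h3 : r p = D.d i0 := congrArg Prod.fst hEq
        have := hrlt p
        omega
    · -- case `j > i0` : use the component `l = j.succ` of `IτN`
      have hcj : D.c i0 < D.c j := by
        have h1 : D.cNext i0 = D.c ⟨(i0 : ℕ) + 1, by omega⟩ := by
          rw [LadderData.cNext, dif_pos (by omega)]
        have h2 : D.c ⟨(i0 : ℕ) + 1, by omega⟩ ≤ D.c j :=
          D.c_mono (by rw [Fin.le_def]; simp; omega)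
        omega
      refine le_trans ?_ le_sup_left
      have hjj : ∀ hh, (⟨(j : ℕ) + 1 - 1, hh⟩ : Fin D.k) = j := fun hh => Fin.ext (by simp)
      have ht : D.tN i0 j.succ = D.t j := by
        simp only [LadderData.tN, Fin.val_succ]
        rw [dif_neg (by omega), hjj]
      have hdN : D.dN i0 j.succ = D.d j := by
        simp only [LadderData.dN, Fin.val_succ]
        rw [dif_neg (by omega), if_neg (by omega), if_neg (by omega), hjj]
      have hcN : D.cN i0 j.succ = D.c j := by
        simp only [LadderData.cN, Fin.val_succ]
        rw [dif_neg (by omega), if_neg (by omega), if_neg (by omega), hjj]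
      have hsub : D.Lj j ⊆ {p ∈ D.Nset i0 | p.1 ≤ D.dN i0 j.succ ∧ D.cN i0 j.succ ≤ p.2} := by
        rintro ⟨p1, p2⟩ ⟨hpL, hp1, hp2⟩
        refine ⟨⟨hpL, fun hEq => ?_⟩, by rw [hdN]; exact hp1, by rw [hcN]; exact hp2⟩
        have h3 : p2 = D.c i0 := congrArg Prod.snd hEq
        omega
      rw [← ht]
      exact le_trans (minorsIdeal_mono D.L hsub _)
        (le_iSup (fun l => minorsIdeal K D.L
          {p ∈ D.Nset i0 | p.1 ≤ D.dN i0 l ∧ D.cN i0 l ≤ p.2} (D.tN i0 l)) j.succ)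
  · -- `I_τ(N) ⊔ Q ≤ I_t(L)`
    apply sup_le
    · -- `I_τ(N) ≤ I_t(L)`
      apply iSup_le
      intro l
      by_cases hl : (l : ℕ) ≤ (i0 : ℕ)
      · set j : Fin D.k := ⟨(l : ℕ), by omega⟩ with hjdef
        have ht : D.tN i0 l = D.t j := by
          simp only [LadderData.tN]
          rw [dif_pos hl]
        have hdd : D.dN i0 l ≤ D.d j ∧ D.c j ≤ D.cN i0 l := by
          simp only [LadderData.dN, LadderData.cN]
          rcases lt_or_eq_of_le hl with hlt | heq
          · rw [dif_pos hlt, dif_pos hlt]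
            exact ⟨le_refl _, le_refl _⟩
          · rw [dif_neg (by omega), if_pos heq, dif_neg (by omega), if_pos heq]
            have hji : j = i0 := Fin.ext heq
            rw [hji]
            exact ⟨Nat.sub_le _ _, le_refl _⟩
        have hsub : {p ∈ D.Nset i0 | p.1 ≤ D.dN i0 l ∧ D.cN i0 l ≤ p.2} ⊆ D.Lj j := by
          rintro ⟨p1, p2⟩ ⟨⟨hpL, _⟩, hp1, hp2⟩
          exact ⟨hpL, le_trans hp1 hdd.1, le_trans hdd.2 hp2⟩
        rw [ht]
        exact le_trans (minorsIdeal_mono D.L hsub (D.t j))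
          (le_iSup (fun j => minorsIdeal K D.L (D.Lj j) (D.t j)) j)
      · by_cases hl2 : (l : ℕ) = (i0 : ℕ) + 1
        · -- `l = i0 + 1`, goes into `L_{i0}`
          have ht : D.tN i0 l = D.t i0 := by
            simp only [LadderData.tN]
            rw [dif_neg hl]
            congr 1
            exact Fin.ext (by simp; omega)
          have hdN : D.dN i0 l = D.d i0 := by
            simp only [LadderData.dN]
            rw [dif_neg (by omega), if_neg (by omega), if_pos hl2]
          have hcN : D.cN i0 l = D.c i0 + 1 := by
            simp only [LadderData.cN]
            rw [dif_neg (by omega), if_neg (by omega), if_pos hl2]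
          have hsub : {p ∈ D.Nset i0 | p.1 ≤ D.dN i0 l ∧ D.cN i0 l ≤ p.2} ⊆ D.Lj i0 := by
            rintro ⟨p1, p2⟩ ⟨⟨hpL, _⟩, hp1, hp2⟩
            rw [hdN] at hp1
            rw [hcN] at hp2
            exact ⟨hpL, hp1, by omega⟩
          rw [ht]
          exact le_trans (minorsIdeal_mono D.L hsub (D.t i0))
            (le_iSup (fun j => minorsIdeal K D.L (D.Lj j) (D.t j)) i0)
        · -- `l ≥ i0 + 2`, goes into `L_{l-1}`
          have hlk : (l : ℕ) - 1 < D.k := by have := l.isLt; have := D.kpos; omega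
          set j : Fin D.k := ⟨(l : ℕ) - 1, hlk⟩ with hjdef
          have ht : D.tN i0 l = D.t j := by
            simp only [LadderData.tN]
            rw [dif_neg hl]
          have hdN : D.dN i0 l = D.d j := by
            simp only [LadderData.dN]
            rw [dif_neg (by omega), if_neg (by omega), if_neg (by omega)]
          have hcN : D.cN i0 l = D.c j := by
            simp only [LadderData.cN]
            rw [dif_neg (by omega), if_neg (by omega), if_neg (by omega)]
          have hsub : {p ∈ D.Nset i0 | p.1 ≤ D.dN i0 l ∧ D.cN i0 l ≤ p.2} ⊆ D.Lj j := by
            rintro ⟨p1, p2⟩ ⟨⟨hpL, _⟩, hp1, hp2⟩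
            rw [hdN] at hp1
            rw [hcN] at hp2
            exact ⟨hpL, hp1, hp2⟩
          rw [ht]
          exact le_trans (minorsIdeal_mono D.L hsub (D.t j))
            (le_iSup (fun j => minorsIdeal K D.L (D.Lj j) (D.t j)) j)
    · -- `Q ≤ I_t(L)`
      refine Ideal.span_le.mpr ?_
      rintro f ⟨ri, js, hri, hjs, hrd, hcjs, hLj, hmemL, rfl⟩
      apply Submodule.mem_iSup_of_mem i0
      show _ ∈ minorsIdeal K D.L (D.Lj i0) (D.t i0)
      rw [← hs]
      exact Ideal.subset_span ⟨snocRow ri (D.d i0), consCol (D.c i0) js,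
        strictMono_snoc hri hrd, strictMono_cons hjs hcjs, hLj, hmemL, rfl⟩
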